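/- Let ε > 0. For any measurable control ε(t) with |ε(t)| ≤ ε, let (x^A(t), y^A(t), z^A(t)) solve ẋ = -y, ẏ = x - ε(t)z, ż = ε(t)y with initial condition (0,0,1), and let z^B(t) = cos(εt). Then z^A(t) ≥ z^B(t) for all t ∈ [0, π/ε]. -/

import Mathlib

open Real

set_option maxHeartbeats 1000000

/-- Lemma 2: under `H = I_z + ε(t)I_x` with `|ε(t)| ≤ ε`, the Bloch `z`-component starting
from `(0,0,1)` dominates `cos(εt)` on `[0, π/ε]`. -/
theorem zA_ge_zB_time_varying (ε : ℝ) (hε : 0 < ε)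
    (u : ℝ → ℝ) (hu : Measurable u) (hbound : ∀ t, |u t| ≤ ε)
    (x y z : ℝ → ℝ)
    (hx : ∀ t, HasDerivAt x (-(y t)) t)
    (hy : ∀ t, HasDerivAt y (x t - u t * z t) t)
    (hz : ∀ t, HasDerivAt z (u t * y t) t)
    (hx0 : x 0 = 0) (hy0 : y 0 = 0) (hz0 : z 0 = 1) :
    ∀ t ∈ Set.Icc 0 (π / ε), z t ≥ Real.cos (ε * t) := by
  -- Conservation of the Bloch sphere: x² + y² + z² = 1
  have hNd : ∀ s, HasDerivAt (fun r => x r ^ 2 + y r ^ 2 + z r ^ 2) 0 s := by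
    intro s
    have h := (((hx s).pow 2).add ((hy s).pow 2)).add ((hz s).pow 2)
    convert h using 1
    all_goals try rfl
    push_cast
    ring
  have hN : ∀ s, x s ^ 2 + y s ^ 2 + z s ^ 2 = 1 := by
    intro s
    have hc := is_const_of_deriv_eq_zero (f := fun r => x r ^ 2 + y r ^ 2 + z r ^ 2)
      (fun r => (hNd r).differentiableAt) (fun r => (hNd r).deriv) s 0
    simp only [hx0, hy0, hz0] at hc
    norm_num at hc
    exact hc
  have hz_le : ∀ s, z s ≤ 1 := fun s => by nlinarith [hN s, sq_nonneg (x s), sq_nonneg (y s)]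
  have hz_ge : ∀ s, -1 ≤ z s := fun s => by nlinarith [hN s, sq_nonneg (x s), sq_nonneg (y s)]
  have hy_sq : ∀ s, y s ^ 2 ≤ 1 - z s ^ 2 := fun s => by nlinarith [hN s, sq_nonneg (x s)]
  intro t ht
  obtain ⟨ht0, htpi⟩ := ht
  have hεt : ε * t ≤ π := by
    rw [le_div_iff₀ hε] at htpi
    linarith [htpi]
  -- the key δ-regularized estimate
  have key : ∀ δ : ℝ, 0 < δ →
      Real.sqrt ((1 - z t) / 2) ≤
        Real.sqrt (1 + 2 * δ) *
          (Real.sin (ε * t / 2) + Real.arcsin (Real.sqrt δ / Real.sqrt (1 + 2 * δ))) := by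
    intro δ hδ
    set c : ℝ := Real.sqrt (1 + 2 * δ) with hc_def
    have hc_pos : 0 < c := Real.sqrt_pos.2 (by linarith)
    have hc_sq : c ^ 2 = 1 + 2 * δ := Real.sq_sqrt (by linarith)
    -- q s = (1 - z s)/2 + δ
    set q : ℝ → ℝ := fun s => (1 - z s) / 2 + δ with hq_def
    have hq_lb : ∀ s, δ ≤ q s := fun s => by
      have := hz_le s; simp only [hq_def]; nlinarith
    have hq_ub : ∀ s, q s ≤ 1 + δ := fun s => by
      have := hz_ge s; simp only [hq_def]; nlinarith
    have hq_pos : ∀ s, 0 < q s := fun s => lt_of_lt_of_le hδ (hq_lb s)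
    have hq_lt : ∀ s, q s < 1 + 2 * δ := fun s => lt_of_le_of_lt (hq_ub s) (by linarith)
    have hqd : ∀ s, HasDerivAt q (-(u s * y s) / 2) s := by
      intro s
      exact (((hz s).const_sub 1).div_const 2).add_const δ
    -- w s = sqrt (q s) / c ∈ [0, 1)
    set w : ℝ → ℝ := fun s => Real.sqrt (q s) / c with hw_def
    have hw_nonneg : ∀ s, 0 ≤ w s := fun s => div_nonneg (Real.sqrt_nonneg _) hc_pos.le
    have hw_lt : ∀ s, w s < 1 := by
      intro s
      rw [hw_def]
      rw [div_lt_one hc_pos]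
      exact Real.sqrt_lt_sqrt (hq_pos s).le (hq_lt s)
    -- K s = arcsin (w s)
    set K : ℝ → ℝ := fun s => Real.arcsin (w s) with hK_def
    set D : ℝ → ℝ := fun s =>
      1 / Real.sqrt (1 - w s ^ 2) * (1 / (2 * Real.sqrt (q s)) * (-(u s * y s) / 2) / c)
      with hD_def
    have hKd : ∀ s, HasDerivAt K (D s) s := by
      intro s
      have h1 : HasDerivAt (fun r => Real.sqrt (q r))
          (1 / (2 * Real.sqrt (q s)) * (-(u s * y s) / 2)) s :=
        (Real.hasDerivAt_sqrt (ne_of_gt (hq_pos s))).comp s (hqd s)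
      have h2 : HasDerivAt w (1 / (2 * Real.sqrt (q s)) * (-(u s * y s) / 2) / c) s :=
        h1.div_const c
      exact (Real.hasDerivAt_arcsin (by linarith [hw_nonneg s]) (ne_of_lt (hw_lt s))).comp s h2
    -- bound the derivative by ε/2
    have hKd_le : ∀ s, D s ≤ ε / 2 := by
      intro s
      set a := Real.sqrt (q s) with ha_def
      have ha_pos : 0 < a := Real.sqrt_pos.2 (hq_pos s)
      have ha_sq : a ^ 2 = q s := Real.sq_sqrt (hq_pos s).le
      set b := Real.sqrt (1 + 2 * δ - q s) with hb_def
      have hb_pos : 0 < b := Real.sqrt_pos.2 (by linarith [hq_lt s])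
      have hb_sq : b ^ 2 = 1 + 2 * δ - q s := Real.sq_sqrt (by linarith [hq_lt s])
      have hw_sq : 1 - w s ^ 2 = (b / c) ^ 2 := by
        rw [hw_def]
        simp only
        rw [div_pow, div_pow, ha_sq, hb_sq, hc_sq]
        field_simp
      have hsqrt_w : Real.sqrt (1 - w s ^ 2) = b / c := by
        rw [hw_sq, Real.sqrt_sq (div_nonneg hb_pos.le hc_pos.le)]
      -- |y s| ≤ 2 a b
      have hy_ab : |y s| ≤ 2 * (a * b) := by
        have h3 : y s ^ 2 ≤ (2 * (a * b)) ^ 2 := by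
          have h4 : (2 * (a * b)) ^ 2 = 4 * (q s * (1 + 2 * δ - q s)) := by
            rw [mul_pow, mul_pow, ha_sq, hb_sq]; ring
          have h5 : 1 - z s ^ 2 ≤ 4 * (q s * (1 + 2 * δ - q s)) := by
            simp only [hq_def]
            nlinarith [hδ, hz_le s, hz_ge s]
          linarith [hy_sq s]
        have h6 := Real.sqrt_le_sqrt h3
        rwa [Real.sqrt_sq_eq_abs, Real.sqrt_sq (by positivity)] at h6
      -- rewrite D s
      have hD_eq : D s = -(u s * y s) / (4 * (a * b)) := by
        rw [hD_def]
        simp only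
        rw [hsqrt_w, ← ha_def]
        field_simp
        ring
      rw [hD_eq, div_le_iff₀ (by positivity)]
      have h7 : -(u s * y s) ≤ |u s| * |y s| := by
        rw [← abs_mul]
        exact neg_le_abs _
      have h8 : |u s| * |y s| ≤ ε * (2 * (a * b)) :=
        mul_le_mul (hbound s) hy_ab (abs_nonneg _) (by linarith [hbound s, abs_nonneg (u s)])
      nlinarith [mul_pos ha_pos hb_pos]
    -- monotonicity: K t ≤ K 0 + (ε/2) t
    have hmono : Monotone (fun s => ε / 2 * s - K s) := by
      apply monotone_of_hasDerivAt_nonneg (f' := fun s => ε / 2 - D s)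
      · intro s
        exact ((hasDerivAt_id s).const_mul (ε / 2)).sub (hKd s) |>.congr_deriv (by simp)
      · intro s
        simp only [Pi.zero_apply, sub_nonneg]
        exact hKd_le s
    have hKt : K t ≤ K 0 + ε / 2 * t := by
      have := hmono ht0
      simp only at this
      linarith
    -- K 0 = arcsin (√δ / c)
    have hK0 : K 0 = Real.arcsin (Real.sqrt δ / c) := by
      simp only [hK_def, hw_def, hq_def, hz0]
      norm_num
    set k0 : ℝ := Real.arcsin (Real.sqrt δ / c) with hk0_def
    have hk0_nonneg : 0 ≤ k0 := Real.arcsin_nonneg.2 (by positivity)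
    have hk0_le : k0 ≤ π / 2 := Real.arcsin_le_pi_div_two _
    set s0 : ℝ := ε * t / 2 with hs0_def
    have hs0_nonneg : 0 ≤ s0 := by positivity
    have hs0_le : s0 ≤ π / 2 := by rw [hs0_def]; linarith
    -- sin (K t) ≤ sin s0 + k0
    have hKt_le : K t ≤ s0 + k0 := by rw [hK0] at hKt; linarith
    have hKt_lo : -(π / 2) ≤ K t := Real.neg_pi_div_two_le_arcsin _
    have hsinK : Real.sin (K t) ≤ Real.sin s0 + k0 := by
      by_cases hcase : s0 + k0 ≤ π / 2
      · have h1 : Real.sin (K t) ≤ Real.sin (s0 + k0) :=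
          Real.sin_le_sin_of_le_of_le_pi_div_two hKt_lo hcase hKt_le
        have h2 : Real.sin (s0 + k0) = Real.sin s0 * Real.cos k0 + Real.cos s0 * Real.sin k0 :=
          Real.sin_add s0 k0
        have h3 : Real.sin k0 ≤ k0 := Real.sin_le hk0_nonneg
        have h4 : Real.sin k0 ≥ 0 := Real.sin_nonneg_of_nonneg_of_le_pi hk0_nonneg
          (by linarith [Real.pi_pos])
        have h5 : Real.sin s0 ≥ 0 := Real.sin_nonneg_of_nonneg_of_le_pi hs0_nonneg
          (by linarith [Real.pi_pos])
        nlinarith [Real.cos_le_one k0, Real.cos_le_one s0]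
      · push_neg at hcase
        have h1 : Real.sin (K t) ≤ 1 := Real.sin_le_one _
        have h2 : Real.sin (π / 2 - k0) ≤ Real.sin s0 :=
          Real.sin_le_sin_of_le_of_le_pi_div_two (by linarith [Real.pi_pos]) hs0_le
            (by linarith)
        rw [Real.sin_pi_div_two_sub] at h2
        have h3 : 1 - k0 ^ 2 / 2 ≤ Real.cos k0 := Real.one_sub_sq_div_two_le_cos (x := k0)
        have h4 : k0 ≤ 2 := by nlinarith [Real.pi_le_four]
        nlinarith
    -- assemble
    have hf_le_q : (1 - z t) / 2 ≤ q t := by simp only [hq_def]; linarith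
    have h1 : Real.sqrt ((1 - z t) / 2) ≤ Real.sqrt (q t) := Real.sqrt_le_sqrt hf_le_q
    have h2 : Real.sqrt (q t) = c * Real.sin (K t) := by
      rw [hK_def]
      simp only
      rw [Real.sin_arcsin (by linarith [hw_nonneg t]) (hw_lt t).le, hw_def]
      field_simp
    calc Real.sqrt ((1 - z t) / 2) ≤ c * Real.sin (K t) := by rw [← h2]; exact h1
      _ ≤ c * (Real.sin s0 + k0) := mul_le_mul_of_nonneg_left hsinK hc_pos.le
  -- take the limit δ → 0⁺
  have hfz_nonneg : 0 ≤ (1 - z t) / 2 := by linarith [hz_le t]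
  have hlim : Filter.Tendsto
      (fun δ : ℝ => Real.sqrt (1 + 2 * δ) *
        (Real.sin (ε * t / 2) + Real.arcsin (Real.sqrt δ / Real.sqrt (1 + 2 * δ))))
      (nhdsWithin 0 (Set.Ioi 0)) (nhds (Real.sin (ε * t / 2))) := by
    have hcont : ContinuousAt
        (fun δ : ℝ => Real.sqrt (1 + 2 * δ) *
          (Real.sin (ε * t / 2) + Real.arcsin (Real.sqrt δ / Real.sqrt (1 + 2 * δ)))) 0 := by
      have c1 : ContinuousAt (fun δ : ℝ => Real.sqrt (1 + 2 * δ)) 0 :=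
        (Real.continuous_sqrt.comp (by continuity)).continuousAt
      have c2 : ContinuousAt (fun δ : ℝ => Real.sqrt δ) 0 := Real.continuous_sqrt.continuousAt
      have c3 : ContinuousAt (fun δ : ℝ => Real.sqrt δ / Real.sqrt (1 + 2 * δ)) 0 := by
        apply c2.div c1
        norm_num
      exact c1.mul (continuousAt_const.add (Real.continuous_arcsin.continuousAt.comp c3))
    have h0 : Real.sqrt (1 + 2 * (0:ℝ)) *
        (Real.sin (ε * t / 2) + Real.arcsin (Real.sqrt 0 / Real.sqrt (1 + 2 * (0:ℝ))))
        = Real.sin (ε * t / 2) := by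
      norm_num
    have := hcont.continuousWithinAt (s := Set.Ioi (0:ℝ))
    rw [ContinuousWithinAt, h0] at this
    exact this
  have hF_le : Real.sqrt ((1 - z t) / 2) ≤ Real.sin (ε * t / 2) := by
    apply ge_of_tendsto hlim
    filter_upwards [self_mem_nhdsWithin] with δ hδ
    exact key δ hδ
  -- conclude
  have hsin_nonneg : 0 ≤ Real.sin (ε * t / 2) :=
    le_trans (Real.sqrt_nonneg _) hF_le
  have hsq : (1 - z t) / 2 ≤ Real.sin (ε * t / 2) ^ 2 := by
    have := pow_le_pow_left₀ (Real.sqrt_nonneg ((1 - z t) / 2)) hF_le 2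
    rwa [Real.sq_sqrt hfz_nonneg] at this
  have hcos : Real.cos (ε * t) = 1 - 2 * Real.sin (ε * t / 2) ^ 2 := by
    have h1 := Real.cos_two_mul' (ε * t / 2)
    have h2 := Real.sin_sq_add_cos_sq (ε * t / 2)
    have h3 : (2 : ℝ) * (ε * t / 2) = ε * t := by ring
    rw [h3] at h1
    linarith
  rw [ge_iff_le, hcos]
  linarith
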